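/- arXiv:2307.12209 — 4 statements merged into one kernel-verified Lean document; each statement's English description precedes it below -/
import Mathlib

section
/- Let s ∈ ℂ, let γ = [[a,b],[c,d]] ∈ SL(2,ℝ), let z = x+iy ∈ ℍ, and let θ ∈ ℝ. Then α¹(γ·(z, v_z(θ))) = −(y^{s+1}/|cz+d|^{2s+2}) · sin(θ − 2 arg(cz+d)); that is, (Im γz)^s · Re(v_z(θ)/(cz+d)²) = −(y^{s+1}/|cz+d|^{2s+2}) · sin(θ − 2 arg(cz+d)). -/
open Complex MeasureTheory
open scoped Real

noncomputable section

abbrev SL2Z := Matrix.SpecialLinearGroup (Fin 2) ℤ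
abbrev SL2R := Matrix.SpecialLinearGroup (Fin 2) ℝ

/-- Entrywise coercion `SL(2,ℤ) → SL(2,ℝ)`. -/
def toSL (g : SL2Z) : SL2R := Matrix.SpecialLinearGroup.map (Int.castRingHom ℝ) g

/-- Möbius action of `SL(2,ℝ)` on `ℂ`. -/
def moeb (γ : SL2R) (z : ℂ) : ℂ :=
  ((γ.1 0 0 : ℝ) * z + (γ.1 0 1 : ℝ)) / ((γ.1 1 0 : ℝ) * z + (γ.1 1 1 : ℝ))

/-- Automorphy factor `cz + d`. -/
def denom (γ : SL2R) (z : ℂ) : ℂ := (γ.1 1 0 : ℝ) * z + (γ.1 1 1 : ℝ)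

/-- Action of `SL(2,ℝ)` on the tangent bundle: `γ·(z,v) = (γz, v/(cz+d)²)`. -/
def tact (γ : SL2R) (p : ℂ × ℂ) : ℂ × ℂ := (moeb γ p.1, p.2 / (denom γ p.1) ^ 2)

/-- The 1-form `α¹(z,v) = (Im z)^s · Re v`. -/
def alpha1 (s : ℂ) (p : ℂ × ℂ) : ℂ := (p.1.im : ℂ) ^ s * (p.2.re : ℂ)

/-- Unit hyperbolic tangent vector at `z` with angle `θ`: `Im(z)·i·e^{iθ}`. -/
def uvec (z : ℂ) (θ : ℝ) : ℂ := (z.im : ℂ) * I * Complex.exp (I * (θ : ℂ))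

/-- `e(w) = exp(2πiw)`. -/
def ee (w : ℂ) : ℂ := Complex.exp (2 * (π : ℂ) * I * w)

/-- The translation matrix `T = [[1,1],[0,1]]`. -/
def T : SL2Z := ⟨!![1, 1; 0, 1], by norm_num [Matrix.det_fin_two_of]⟩

/-- The stabilizer `Γ_∞ = ⟨T⟩` of the cusp `∞` in `SL(2,ℤ)`. -/
def Gammainf : Subgroup SL2Z := Subgroup.zpowers T

/-- The 1-form Eisenstein series `E¹((z,v),s) = Σ_{γ ∈ Γ_∞\Γ} α¹(γ·(z,v))`. -/
def E1 (s : ℂ) (p : ℂ × ℂ) : ℂ :=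
  ∑' q : Quotient (QuotientGroup.rightRel Gammainf), alpha1 s (tact (toSL q.out) p)

/-- Modified Bessel function of the second kind `K_ν(x) = ∫_0^∞ e^{-x cosh t} cosh(νt) dt`. -/
def Kbessel (ν : ℂ) (x : ℝ) : ℂ :=
  ∫ t in Set.Ioi (0 : ℝ), Complex.exp (-(x : ℂ) * (Real.cosh t : ℂ)) * Complex.cosh (ν * (t : ℂ))

/-- `φ(s) = √π Γ(s-1/2) ζ(2s-1) / (Γ(s) ζ(2s))`. -/
def phi0 (s : ℂ) : ℂ :=
  (Real.sqrt π : ℂ) * Complex.Gamma (s - 1/2) * riemannZeta (2*s - 1) /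
    (Complex.Gamma s * riemannZeta (2*s))

/-- `φ(n,s) = ζ(2s)⁻¹ Σ_{d | |n|} d^{1-2s}`. -/
def phin (n : ℤ) (s : ℂ) : ℂ :=
  (riemannZeta (2*s))⁻¹ * ∑ d ∈ n.natAbs.divisors, (d : ℂ) ^ ((1 : ℂ) - 2*s)

/-- `φ₁(n,s) = Σ_{c≥1} c^{-2s-2} Σ_{0≤d<c, gcd(d,c)=1} cos(2πnd/c)`. -/
def phi1 (n : ℤ) (s : ℂ) : ℂ :=
  ∑' c : ℕ+, ((c : ℝ) : ℂ) ^ (-2*s - 2) *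
    ∑ d ∈ (Finset.range (c : ℕ)).filter (fun d => Nat.gcd d (c : ℕ) = 1),
      (Real.cos (2*π*(n : ℝ)*(d : ℝ)/(c : ℝ)) : ℂ)

/-- `φ₂(n,s) = Σ_{c≥1} c^{-2s-2} Σ_{0≤d<c, gcd(d,c)=1} sin(2πnd/c)`. -/
def phi2 (n : ℤ) (s : ℂ) : ℂ :=
  ∑' c : ℕ+, ((c : ℝ) : ℂ) ^ (-2*s - 2) *
    ∑ d ∈ (Finset.range (c : ℕ)).filter (fun d => Nat.gcd d (c : ℕ) = 1),
      (Real.sin (2*π*(n : ℝ)*(d : ℝ)/(c : ℝ)) : ℂ)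


private lemma cpow_pos_real' (x : ℝ) (hx : 0 < x) (t : ℂ) :
    (x : ℂ) ^ t = Complex.exp (t * (Real.log x : ℂ)) := by
  rw [Complex.cpow_def_of_ne_zero (by exact_mod_cast hx.ne'), Complex.ofReal_log hx.le, mul_comm]

private lemma cast_pos_real_exp' (x : ℝ) (hx : 0 < x) :
    (x : ℂ) = Complex.exp ((Real.log x : ℂ)) := by
  rw [← Complex.ofReal_exp, Real.exp_log hx]

private lemma cpow_helper' (y r : ℝ) (hy : 0 < y) (hr : 0 < r) (s : ℂ) :
    ((y / r^2 : ℝ) : ℂ) ^ s * ((y / r^2 : ℝ) : ℂ) =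
      (y : ℂ) ^ (s + 1) / (r : ℂ) ^ (2*s + 2) := by
  have h1 : 0 < y / r^2 := div_pos hy (by positivity)
  rw [cpow_pos_real' _ h1, cpow_pos_real' _ hy, cpow_pos_real' _ hr,
    cast_pos_real_exp' _ h1, ← Complex.exp_add, ← Complex.exp_sub]
  congr 1
  rw [Real.log_div hy.ne' (by positivity), Real.log_pow]
  push_cast
  ring

private lemma denom_ne' (γ : SL2R) (z : ℂ) (hz : 0 < z.im) : denom γ z ≠ 0 := by
  intro H
  have hdet := γ.2
  rw [Matrix.det_fin_two] at hdet
  have him := congr_arg Complex.im H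
  simp [denom, Complex.add_im, Complex.mul_im] at him
  rcases him with h | h
  · have hre := congr_arg Complex.re H
    simp [denom, h, Complex.add_re, Complex.mul_re] at hre
    rw [h, hre] at hdet
    simp at hdet
  · exact absurd h hz.ne'

private lemma moeb_im' (γ : SL2R) (z : ℂ) (hz : 0 < z.im) :
    (moeb γ z).im = z.im / Complex.normSq (denom γ z) := by
  have hdet := γ.2
  rw [Matrix.det_fin_two] at hdet
  rw [moeb, Complex.div_im]
  show _ / Complex.normSq (denom γ z) - _ / Complex.normSq (denom γ z) = _
  rw [div_sub_div_same]
  congr 1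
  simp [Complex.add_im, Complex.add_re, Complex.mul_im, Complex.mul_re]
  nlinarith [hdet]

private lemma uvec_div_re' (z w : ℂ) (hw : w ≠ 0) (θ : ℝ) :
    (uvec z θ / w ^ 2).re =
      -(z.im * Real.sin (θ - 2 * Complex.arg w) / ‖w‖ ^ 2) := by
  set a := ‖w‖ with ha
  set φ := Complex.arg w with hφ
  have hr : (0:ℝ) < a := norm_pos_iff.mpr hw
  have ha2 : ((a:ℂ))^2 ≠ 0 := pow_ne_zero 2 (Complex.ofReal_ne_zero.mpr hr.ne')
  have he : Complex.exp (I * ((θ:ℂ) - 2*(φ:ℂ))) * Complex.exp ((φ:ℂ)*I)^2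
      = Complex.exp (I * (θ:ℂ)) := by
    rw [← Complex.exp_nat_mul, ← Complex.exp_add]
    congr 1
    push_cast
    ring
  have key : uvec z θ / w ^ 2 =
      ((z.im / a ^ 2 : ℝ) : ℂ) * (I * Complex.exp (I * ((θ - 2*φ : ℝ):ℂ))) := by
    rw [div_eq_iff (pow_ne_zero 2 hw)]
    rw [show w = (a:ℂ) * Complex.exp ((φ:ℂ)*I) from (Complex.norm_mul_exp_arg_mul_I w).symm]
    rw [uvec, mul_pow]
    push_cast
    rw [← he]
    field_simp [Complex.ofReal_ne_zero.mpr hr.ne']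
  rw [key]
  simp only [Complex.mul_re, Complex.ofReal_re, Complex.ofReal_im, Complex.mul_im,
    Complex.I_re, Complex.I_im, zero_mul, one_mul, zero_sub, mul_comm I,
    Complex.exp_ofReal_mul_I_re, Complex.exp_ofReal_mul_I_im]
  ring

/-- Evaluation of the 1-form `α¹` on the image of a unit tangent vector:
`α¹(γ·(z, v_z(θ))) = -(y^{s+1}/|cz+d|^{2s+2}) sin(θ - 2 arg(cz+d))`. -/
theorem stmt1 (s : ℂ) (γ : SL2R) (z : ℂ) (hz : 0 < z.im) (θ : ℝ) :
    alpha1 s (tact γ (z, uvec z θ)) =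
      -((z.im : ℂ) ^ (s + 1) / (((‖denom γ z‖ : ℝ) : ℂ)) ^ (2*s + 2)) *
        (Real.sin (θ - 2 * Complex.arg (denom γ z)) : ℂ) := by
  set w := denom γ z with hwdef
  have hw : w ≠ 0 := denom_ne' γ z hz
  have hr : (0:ℝ) < ‖w‖ := norm_pos_iff.mpr hw
  have h1 : alpha1 s (tact γ (z, uvec z θ)) =
      ((moeb γ z).im : ℂ) ^ s * ((uvec z θ / w ^ 2).re : ℂ) := by
    simp [alpha1, tact, sq, hwdef]
  rw [h1, moeb_im' γ z hz, ← Complex.sq_norm, uvec_div_re' z w hw θ, ← hwdef]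
  rw [show (-(z.im * Real.sin (θ - 2 * Complex.arg w) / ‖w‖^2) : ℝ)
      = -((z.im / ‖w‖^2) * Real.sin (θ - 2 * Complex.arg w)) from by ring]
  rw [Complex.ofReal_neg, Complex.ofReal_mul]
  have h := cpow_helper' z.im ‖w‖ hz hr s
  linear_combination (-(Real.sin (θ - 2 * Complex.arg w) : ℂ)) * h

end
end

section
/- Let s ∈ ℂ with Re(s) > 1, c > 0, d ∈ ℝ, z = x+iy ∈ ℍ, and n ∈ ℤ. Then ∫_{−∞}^{∞} (cx+ct+d)²/|cz+ct+d|^{2s+4} · e(−nt) dt = e(nx + nd/c) · c^{−2s−2} · y^{−2s−1} · [ ∫_{−∞}^{∞} (t²+1)^{−(s+1)} e(−nyt) dt − ∫_{−∞}^{∞} (t²+1)^{−(s+2)} e(−nyt) dt ]. -/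
open Complex MeasureTheory
open scoped Real

noncomputable section

lemma ee_add (a b : ℂ) : ee (a + b) = ee a * ee b := by
  simp [ee, mul_add, Complex.exp_add]

lemma abs_ee (r : ℝ) : ‖ee (r : ℂ)‖ = 1 := by
  simp [ee, Complex.norm_exp]

lemma cpow_pos_exp {r : ℝ} (hr : 0 < r) (w : ℂ) :
    ((r : ℂ)) ^ w = Complex.exp (w * Real.log r) := by
  rw [Complex.cpow_def_of_ne_zero (by exact_mod_cast hr.ne'), ← Complex.ofReal_log hr.le,
    mul_comm]

lemma sqrt_cpow {v : ℝ} (hv : 0 < v) (s : ℂ) :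
    ((Real.sqrt v : ℝ) : ℂ) ^ (2*s + 4) = ((v : ℝ) : ℂ) ^ (s + 2) := by
  rw [cpow_pos_exp (Real.sqrt_pos.2 hv), cpow_pos_exp hv, Real.log_sqrt hv.le]
  congr 1
  push_cast
  ring

lemma cpow_real_two {r : ℝ} : ((r:ℂ)) ^ (2 : ℂ) = (r:ℂ) ^ (2:ℕ) := by
  rw [show ((2:ℂ)) = ((2:ℕ):ℂ) by norm_num, Complex.cpow_natCast]

lemma integrable_aux {b : ℂ} (hb : 1 ≤ b.re) (m : ℝ) :
    Integrable (fun t : ℝ => ((t^2 + 1 : ℝ) : ℂ) ^ (-b) * ee ((m : ℂ) * (t : ℂ))) := by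
  have hpos : ∀ t : ℝ, (0:ℝ) < t^2 + 1 := fun t => by positivity
  have hmeas : AEStronglyMeasurable
      (fun t : ℝ => ((t^2 + 1 : ℝ) : ℂ) ^ (-b) * ee ((m : ℂ) * (t : ℂ))) volume := by
    apply Continuous.aestronglyMeasurable
    have h1 : Continuous (fun t : ℝ => ((t^2 + 1 : ℝ) : ℂ) ^ (-b)) := by
      have : (fun t : ℝ => ((t^2 + 1 : ℝ) : ℂ) ^ (-b)) =
          fun t : ℝ => Complex.exp ((-b) * Real.log (t^2+1)) := by
        funext t; rw [cpow_pos_exp (hpos t)]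
      rw [this]
      exact Complex.continuous_exp.comp (continuous_const.mul
        (Complex.continuous_ofReal.comp
          (((continuous_pow 2).add continuous_const).log fun t => (hpos t).ne')))
    exact h1.mul (Complex.continuous_exp.comp (by fun_prop))
  apply Integrable.mono' (g := fun t : ℝ => (1 + t^2)⁻¹) integrable_inv_one_add_sq hmeas
  filter_upwards with t
  rw [norm_mul]
  have h2 : ‖ee ((m:ℂ) * (t:ℂ))‖ = 1 := by
    rw [show (m:ℂ) * (t:ℂ) = ((m*t : ℝ):ℂ) by push_cast; ring]
    exact abs_ee (m*t)
  rw [h2, mul_one]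
  have h3 : ‖((t^2 + 1 : ℝ) : ℂ) ^ (-b)‖ = (t^2+1) ^ (-b).re :=
    Complex.norm_cpow_eq_rpow_re_of_pos (hpos t) _
  rw [h3]
  have h4 : (t^2+1 : ℝ) ^ (-b).re ≤ (t^2+1 : ℝ) ^ (-1 : ℝ) := by
    apply Real.rpow_le_rpow_of_exponent_le (by nlinarith [sq_nonneg t])
    simp only [Complex.neg_re]; linarith
  calc (t^2+1 : ℝ) ^ (-b).re ≤ (t^2+1 : ℝ) ^ (-1 : ℝ) := h4
    _ = (1 + t^2)⁻¹ := by rw [Real.rpow_neg_one]; ring_nf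

lemma pointwise (s : ℂ) (c d x y : ℝ) (hc : 0 < c) (hy : 0 < y) (n : ℤ) (t : ℝ) :
    ((c*x + c*t + d : ℝ) : ℂ) ^ 2 /
        (((‖(c : ℂ) * ((x : ℂ) + (y : ℂ) * I) + (c : ℂ) * (t : ℂ) + (d : ℂ)‖ : ℝ) : ℂ)) ^ (2*s + 4) *
        ee (-(n : ℂ) * (t : ℂ)) =
    (ee ((n : ℂ) * (x : ℂ) + (n : ℂ) * (d : ℂ) / (c : ℂ)) * ((c : ℂ)) ^ (-2*s - 2) *
        ((y : ℂ)) ^ (-2*s - 2)) *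
      ((((y⁻¹*(t + (x + d/c)))^2 + 1 : ℝ) : ℂ) ^ (-(s + 1)) *
          ee (-(n : ℂ) * (y : ℂ) * ((y⁻¹*(t + (x + d/c)) : ℝ) : ℂ)) -
        (((y⁻¹*(t + (x + d/c)))^2 + 1 : ℝ) : ℂ) ^ (-(s + 2)) *
          ee (-(n : ℂ) * (y : ℂ) * ((y⁻¹*(t + (x + d/c)) : ℝ) : ℂ))) := by
  set u : ℝ := y⁻¹*(t + (x + d/c)) with hu
  set v : ℝ := u^2 + 1 with hv
  have hv0 : (0:ℝ) < v := by positivity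
  have hcne : (c:ℂ) ≠ 0 := by exact_mod_cast hc.ne'
  have hyne : (y:ℂ) ≠ 0 := by exact_mod_cast hy.ne'
  have hvne : ((v:ℝ):ℂ) ≠ 0 := by exact_mod_cast hv0.ne'
  -- real identity
  have h1 : (c*x + c*t + d : ℝ) = c*y*u := by rw [hu]; field_simp; ring
  have h1c : ((c*x + c*t + d : ℝ) : ℂ) = (c:ℂ)*(y:ℂ)*(u:ℂ) := by
    rw [h1]; push_cast; ring
  -- the complex number is c*y*(u+I)
  have h2 : (c : ℂ) * ((x : ℂ) + (y : ℂ) * I) + (c : ℂ) * (t : ℂ) + (d : ℂ)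
      = ((c*y : ℝ) : ℂ) * ((u:ℂ) + I) := by
    have := h1c
    push_cast at this ⊢
    linear_combination this
  -- absolute value
  have h3 : ‖(c : ℂ) * ((x : ℂ) + (y : ℂ) * I) + (c : ℂ) * (t : ℂ) + (d : ℂ)‖
      = c*y*Real.sqrt v := by
    rw [h2, norm_mul, Complex.norm_real, Real.norm_eq_abs, abs_of_pos (by positivity)]
    congr 1
    rw [Complex.norm_def]
    congr 1
    simp [Complex.normSq_apply, hv]
    ring
  -- cpow of the absolute value
  have h4 : (((c*y*Real.sqrt v : ℝ)) : ℂ) ^ (2*s + 4)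
      = (c:ℂ) ^ (2*s+4) * (y:ℂ) ^ (2*s+4) * ((v:ℝ):ℂ) ^ (s+2) := by
    rw [show ((c*y*Real.sqrt v : ℝ) : ℂ) = ((c*y:ℝ):ℂ) * ((Real.sqrt v : ℝ):ℂ) by push_cast; ring,
      Complex.mul_cpow_ofReal_nonneg (by positivity) (Real.sqrt_nonneg v),
      Complex.ofReal_mul, Complex.mul_cpow_ofReal_nonneg hc.le hy.le, sqrt_cpow hv0]
  -- ee splitting
  have h6 : ee (-(n : ℂ) * (t : ℂ))
      = ee ((n : ℂ) * (x : ℂ) + (n : ℂ) * (d : ℂ) / (c : ℂ)) *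
        ee (-(n : ℂ) * (y : ℂ) * ((u : ℝ) : ℂ)) := by
    rw [← ee_add]
    congr 1
    have hyu : (y:ℂ) * (u:ℂ) = (t:ℂ) + ((x:ℂ) + (d:ℂ)/(c:ℂ)) := by
      have h0 : y * u = t + (x + d/c) := by rw [hu]; field_simp
      have h := congrArg (fun r : ℝ => (r:ℂ)) h0
      push_cast at h
      exact h
    linear_combination (n:ℂ) * hyu
  -- cpow arithmetic
  have hpc : (c:ℂ) ^ (2*s+4) * (c:ℂ) ^ (-2*s-2) = (c:ℂ)^(2:ℕ) := by
    rw [← Complex.cpow_add _ _ hcne, show 2*s+4 + (-2*s-2) = (2:ℂ) by ring, cpow_real_two]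
  have hpy : (y:ℂ) ^ (2*s+4) * (y:ℂ) ^ (-2*s-2) = (y:ℂ)^(2:ℕ) := by
    rw [← Complex.cpow_add _ _ hyne, show 2*s+4 + (-2*s-2) = (2:ℂ) by ring, cpow_real_two]
  have hpv1 : ((v:ℝ):ℂ) ^ (-(s+1)) * ((v:ℝ):ℂ) ^ (s+2) = ((v:ℝ):ℂ) := by
    rw [← Complex.cpow_add _ _ hvne, show -(s+1) + (s+2) = (1:ℂ) by ring, Complex.cpow_one]
  have hpv2 : ((v:ℝ):ℂ) ^ (-(s+2)) * ((v:ℝ):ℂ) ^ (s+2) = 1 := by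
    rw [← Complex.cpow_add _ _ hvne, show -(s+2) + (s+2) = (0:ℂ) by ring, Complex.cpow_zero]
  have hvu : ((v:ℝ):ℂ) = (u:ℂ)^2 + 1 := by rw [hv]; push_cast; ring
  -- nonvanishing of cpows
  have hne1 : (c:ℂ) ^ (2*s+4) ≠ 0 := by
    intro h; exact hcne (Complex.cpow_eq_zero_iff _ _ |>.mp h).1
  have hne2 : (y:ℂ) ^ (2*s+4) ≠ 0 := by
    intro h; exact hyne (Complex.cpow_eq_zero_iff _ _ |>.mp h).1
  have hne3 : ((v:ℝ):ℂ) ^ (s+2) ≠ 0 := by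
    intro h; exact hvne (Complex.cpow_eq_zero_iff _ _ |>.mp h).1
  -- assemble
  rw [h1c, h3, h4, h6]
  have hD : (c:ℂ)^(2*s+4) * (y:ℂ)^(2*s+4) * ((v:ℝ):ℂ)^(s+2) ≠ 0 :=
    mul_ne_zero (mul_ne_zero hne1 hne2) hne3
  rw [div_mul_eq_mul_div, div_eq_iff hD]
  set E := ee ((n:ℂ)*(x:ℂ) + (n:ℂ)*(d:ℂ)/(c:ℂ)) with hE
  set F := ee (-(n:ℂ)*(y:ℂ)*((u:ℝ):ℂ)) with hF
  linear_combination
    (-(E*F) * ((y:ℂ)^(2*s+4)*(y:ℂ)^(-2*s-2)) *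
      (((v:ℝ):ℂ)^(-(s+1))*((v:ℝ):ℂ)^(s+2) - ((v:ℝ):ℂ)^(-(s+2))*((v:ℝ):ℂ)^(s+2))) * hpc +
    (-(E*F) * (c:ℂ)^(2:ℕ) *
      (((v:ℝ):ℂ)^(-(s+1))*((v:ℝ):ℂ)^(s+2) - ((v:ℝ):ℂ)^(-(s+2))*((v:ℝ):ℂ)^(s+2))) * hpy +
    (-(E*F) * (c:ℂ)^(2:ℕ)*(y:ℂ)^(2:ℕ)) * hpv1 +
    (E*F * (c:ℂ)^(2:ℕ)*(y:ℂ)^(2:ℕ)) * hpv2 +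
    (-(E*F) * (c:ℂ)^(2:ℕ)*(y:ℂ)^(2:ℕ)) * hvu


/-- First integral simplification in the Fourier coefficient computation. -/
theorem stmt7 (s : ℂ) (hs : 1 < s.re) (c d x y : ℝ) (hc : 0 < c) (hy : 0 < y) (n : ℤ) :
    (∫ t : ℝ, ((c*x + c*t + d : ℝ) : ℂ) ^ 2 /
        (((‖(c : ℂ) * ((x : ℂ) + (y : ℂ) * I) + (c : ℂ) * (t : ℂ) + (d : ℂ)‖ : ℝ) : ℂ)) ^ (2*s + 4) *
        ee (-(n : ℂ) * (t : ℂ))) =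
      ee ((n : ℂ) * (x : ℂ) + (n : ℂ) * (d : ℂ) / (c : ℂ)) * ((c : ℂ)) ^ (-2*s - 2) *
        ((y : ℂ)) ^ (-2*s - 1) *
        ((∫ t : ℝ, ((t^2 + 1 : ℝ) : ℂ) ^ (-(s + 1)) * ee (-(n : ℂ) * (y : ℂ) * (t : ℂ))) -
          ∫ t : ℝ, ((t^2 + 1 : ℝ) : ℂ) ^ (-(s + 2)) * ee (-(n : ℂ) * (y : ℂ) * (t : ℂ))) := by
  have hyne : (y:ℂ) ≠ 0 := by exact_mod_cast hy.ne'
  set g : ℝ → ℂ := fun u : ℝ =>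
    ((u^2 + 1 : ℝ) : ℂ) ^ (-(s + 1)) * ee (-(n : ℂ) * (y : ℂ) * (u : ℂ)) -
      ((u^2 + 1 : ℝ) : ℂ) ^ (-(s + 2)) * ee (-(n : ℂ) * (y : ℂ) * (u : ℂ)) with hg
  set C : ℂ := ee ((n : ℂ) * (x : ℂ) + (n : ℂ) * (d : ℂ) / (c : ℂ)) * ((c : ℂ)) ^ (-2*s - 2) *
      ((y : ℂ)) ^ (-2*s - 2) with hC
  have hfun : (fun t : ℝ => ((c*x + c*t + d : ℝ) : ℂ) ^ 2 /
        (((‖(c : ℂ) * ((x : ℂ) + (y : ℂ) * I) + (c : ℂ) * (t : ℂ) + (d : ℂ)‖ : ℝ) : ℂ)) ^ (2*s + 4) *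
        ee (-(n : ℂ) * (t : ℂ)))
      = fun t : ℝ => C * g (y⁻¹ * (t + (x + d/c))) := by
    funext t
    exact pointwise s c d x y hc hy n t
  rw [hfun, MeasureTheory.integral_const_mul]
  rw [show (∫ t : ℝ, g (y⁻¹ * (t + (x + d/c)))) = ∫ t : ℝ, g (y⁻¹ * t) from
    MeasureTheory.integral_add_right_eq_self (fun t : ℝ => g (y⁻¹ * t)) (x + d/c)]
  rw [show (∫ t : ℝ, g (y⁻¹ * t)) = |y⁻¹⁻¹| • ∫ t : ℝ, g t from
    MeasureTheory.Measure.integral_comp_mul_left g y⁻¹]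
  rw [inv_inv, abs_of_pos hy]
  have hA : Integrable (fun u : ℝ =>
      ((u^2 + 1 : ℝ) : ℂ) ^ (-(s + 1)) * ee (-(n : ℂ) * (y : ℂ) * (u : ℂ))) := by
    have h := integrable_aux (b := s+1) (by simp; linarith) (-(n*y) : ℝ)
    refine h.congr (Filter.Eventually.of_forall fun u => ?_)
    have h2 : ((-(n*y) : ℝ) : ℂ) * (u : ℂ) = -(n:ℂ) * (y:ℂ) * (u:ℂ) := by push_cast; ring
    beta_reduce
    rw [h2]
  have hB : Integrable (fun u : ℝ =>
      ((u^2 + 1 : ℝ) : ℂ) ^ (-(s + 2)) * ee (-(n : ℂ) * (y : ℂ) * (u : ℂ))) := by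
    have h := integrable_aux (b := s+2) (by simp; linarith) (-(n*y) : ℝ)
    refine h.congr (Filter.Eventually.of_forall fun u => ?_)
    have h2 : ((-(n*y) : ℝ) : ℂ) * (u : ℂ) = -(n:ℂ) * (y:ℂ) * (u:ℂ) := by push_cast; ring
    beta_reduce
    rw [h2]
  rw [hg, MeasureTheory.integral_sub hA hB]
  rw [Complex.real_smul, hC]
  have hyy : (y:ℂ) ^ (-2*s - 2) * (y:ℂ) = (y:ℂ) ^ (-2*s - 1) := by
    rw [show (-2*s - 1 : ℂ) = (-2*s - 2) + 1 by ring, Complex.cpow_add _ _ hyne,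
      Complex.cpow_one]
  linear_combination (ee ((n : ℂ) * (x : ℂ) + (n : ℂ) * (d : ℂ) / (c : ℂ)) * ((c : ℂ)) ^ (-2*s - 2) *
    ((∫ t : ℝ, ((t^2 + 1 : ℝ) : ℂ) ^ (-(s + 1)) * ee (-(n : ℂ) * (y : ℂ) * (t : ℂ))) -
          ∫ t : ℝ, ((t^2 + 1 : ℝ) : ℂ) ^ (-(s + 2)) * ee (-(n : ℂ) * (y : ℂ) * (t : ℂ)))) * hyy

end
end

section
/- Let s ∈ ℂ with Re(s) > 1, c > 0, d ∈ ℝ, z = x+iy ∈ ℍ, and n ∈ ℤ. Then ∫_{−∞}^{∞} (cx+ct+d)/|cz+ct+d|^{2s+4} · e(−nt) dt = −2i · e(nx + nd/c) · c^{−2s−3} · y^{−2s−2} · ∫_{0}^{∞} t·(t²+1)^{−(s+2)} · sin(2πnyt) dt. -/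
open Complex MeasureTheory
open scoped Real

noncomputable section

namespace Stmt9Aux

lemma sq_cpow {b : ℝ} (hb : 0 ≤ b) (w : ℂ) :
    (((b ^ 2 : ℝ) : ℂ)) ^ w = (b : ℂ) ^ (2 * w) := by
  have h := Complex.cpow_mul_ofReal_nonneg hb 2 w
  rw [Real.rpow_two] at h
  rw [← h]
  norm_num

lemma integrable_aux (s : ℂ) (hs : 1 < s.re) (g : ℝ → ℝ) (hg : Continuous g)
    (hg1 : ∀ t, |g t| ≤ 1) :
    MeasureTheory.Integrable fun t : ℝ =>
      (t : ℂ) * (((t ^ 2 + 1 : ℝ) : ℂ)) ^ (-(s + 2)) * ((g t : ℝ) : ℂ) := by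
  have hpos : ∀ t : ℝ, (0 : ℝ) < t ^ 2 + 1 := fun t => by positivity
  have hcont : Continuous fun t : ℝ =>
      (t : ℂ) * (((t ^ 2 + 1 : ℝ) : ℂ)) ^ (-(s + 2)) * ((g t : ℝ) : ℂ) := by
    refine Continuous.mul (Continuous.mul Complex.continuous_ofReal ?_)
      (Complex.continuous_ofReal.comp hg)
    exact (Complex.continuous_ofReal.comp (by continuity)).cpow continuous_const
      (fun t => Complex.ofReal_mem_slitPlane.2 (hpos t))
  have hint : MeasureTheory.Integrable fun t : ℝ => (1 + ‖t‖ ^ 2) ^ (-(2 * s.re + 3) / 2) :=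
    integrable_rpow_neg_one_add_norm_sq (by simp; linarith)
  refine hint.mono hcont.aestronglyMeasurable (Filter.Eventually.of_forall fun t => ?_)
  have hb : ‖(1 + ‖t‖ ^ 2 : ℝ) ^ (-(2 * s.re + 3) / 2)‖ = (1 + t ^ 2) ^ (-(2 * s.re + 3) / 2) := by
    rw [Real.norm_eq_abs, _root_.abs_of_nonneg (Real.rpow_nonneg (by positivity) _),
      Real.norm_eq_abs, _root_.sq_abs]
  rw [hb, norm_mul, norm_mul]
  have h1 : ‖((t : ℝ) : ℂ)‖ = |t| := by
    rw [Complex.norm_real, Real.norm_eq_abs]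
  have h2 : ‖(((t ^ 2 + 1 : ℝ) : ℂ)) ^ (-(s + 2))‖ = (1 + t ^ 2) ^ (-(s.re + 2)) := by
    rw [Complex.norm_cpow_eq_rpow_re_of_pos (hpos t)]
    rw [show ((1:ℝ) + t^2) = t^2 + 1 by ring, show (-(s + 2)).re = -(s.re + 2) by simp]
  have h3 : ‖((g t : ℝ) : ℂ)‖ ≤ 1 := by
    rw [Complex.norm_real, Real.norm_eq_abs]; exact hg1 t
  rw [h1, h2]
  have key : |t| ≤ (1 + t ^ 2) ^ ((1 : ℝ) / 2) := by
    rw [← Real.sqrt_sq_eq_abs, Real.sqrt_eq_rpow]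
    exact Real.rpow_le_rpow (sq_nonneg t) (by linarith [sq_nonneg t]) (by norm_num)
  have hsplit : (1 + t ^ 2) ^ (-(2 * s.re + 3) / 2)
      = (1 + t ^ 2) ^ ((1 : ℝ) / 2) * (1 + t ^ 2) ^ (-(s.re + 2)) := by
    rw [← Real.rpow_add (by positivity)]
    ring_nf
  rw [hsplit]
  calc |t| * (1 + t ^ 2) ^ (-(s.re + 2)) * ‖((g t : ℝ) : ℂ)‖
      ≤ |t| * (1 + t ^ 2) ^ (-(s.re + 2)) * 1 := by
        refine mul_le_mul_of_nonneg_left h3 (by positivity)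
    _ ≤ (1 + t ^ 2) ^ ((1 : ℝ) / 2) * (1 + t ^ 2) ^ (-(s.re + 2)) := by
        rw [mul_one]
        exact mul_le_mul_of_nonneg_right key (Real.rpow_nonneg (by positivity) _)

end Stmt9Aux

open Stmt9Aux in
/-- Third integral simplification in the Fourier coefficient computation. -/
theorem stmt9 (s : ℂ) (hs : 1 < s.re) (c d x y : ℝ) (hc : 0 < c) (hy : 0 < y) (n : ℤ) :
    (∫ t : ℝ, ((c*x + c*t + d : ℝ) : ℂ) /
        ((‖(c : ℂ) * ((x : ℂ) + (y : ℂ) * I) + (c : ℂ) * (t : ℂ) + (d : ℂ)‖ : ℝ) : ℂ) ^ (2*s + 4) *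
        ee (-(n : ℂ) * (t : ℂ))) =
      -2 * I * ee ((n : ℂ) * (x : ℂ) + (n : ℂ) * (d : ℂ) / (c : ℂ)) * ((c : ℂ)) ^ (-2*s - 3) *
        ((y : ℂ)) ^ (-2*s - 2) *
        ∫ t in Set.Ioi (0 : ℝ), (t : ℂ) * ((t^2 + 1 : ℝ) : ℂ) ^ (-(s + 2)) *
          (Real.sin (2*π*(n : ℝ)*y*t) : ℂ) := by
  have hc' : (c : ℂ) ≠ 0 := Complex.ofReal_ne_zero.2 hc.ne'
  -- the functions
  set Q : ℝ → ℂ := fun t => (t : ℂ) * ((t^2 + 1 : ℝ) : ℂ) ^ (-(s + 2)) with hQ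
  set K : ℝ → ℂ := fun t => Q t * ee (-(n : ℂ) * ((y * t : ℝ) : ℂ)) with hK
  set Kc : ℝ → ℂ := fun t => Q t * ((Real.cos (2*π*(n : ℝ)*y*t) : ℝ) : ℂ) with hKc
  set Ks : ℝ → ℂ := fun t => Q t * ((Real.sin (2*π*(n : ℝ)*y*t) : ℝ) : ℂ) with hKs
  set H : ℝ → ℂ := fun u => (u : ℂ) * ((u^2 + y^2 : ℝ) : ℂ) ^ (-(s + 2)) * ee (-(n : ℂ) * (u : ℂ)) with hH
  set G : ℝ → ℂ := fun u =>
    ((c*u : ℝ) : ℂ) * (((c*u)^2 + (c*y)^2 : ℝ) : ℂ) ^ (-(s + 2)) * ee (-(n : ℂ) * (u : ℂ)) with hG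
  -- Step A
  have hpt : ∀ t : ℝ, ((c*x + c*t + d : ℝ) : ℂ) /
        ((‖(c : ℂ) * ((x : ℂ) + (y : ℂ) * I) + (c : ℂ) * (t : ℂ) + (d : ℂ)‖ : ℝ) : ℂ) ^ (2*s + 4) *
        ee (-(n : ℂ) * (t : ℂ))
      = ee ((n : ℂ) * (x : ℂ) + (n : ℂ) * (d : ℂ) / (c : ℂ)) * G (t + (x + d/c)) := by
    intro t
    have habs : ((‖(c : ℂ) * ((x : ℂ) + (y : ℂ) * I) + (c : ℂ) * (t : ℂ) + (d : ℂ)‖ : ℝ) : ℂ) ^ (2*s + 4)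
        = (((c*x + c*t + d)^2 + (c*y)^2 : ℝ) : ℂ) ^ (s + 2) := by
      have h1 : (‖(c : ℂ) * ((x : ℂ) + (y : ℂ) * I) + (c : ℂ) * (t : ℂ) + (d : ℂ)‖)^2
          = (c*x + c*t + d)^2 + (c*y)^2 := by
        rw [Complex.sq_norm]
        simp [Complex.normSq_apply]
        ring
      rw [← h1, sq_cpow (norm_nonneg _)]
      congr 1
      ring
    rw [habs]
    have e1 : c * (t + (x + d/c)) = c*x + c*t + d := by field_simp; ring
    have e2 : ee ((n : ℂ) * (x : ℂ) + (n : ℂ) * (d : ℂ) / (c : ℂ)) *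
        ee (-(n : ℂ) * ((t + (x + d/c) : ℝ) : ℂ)) = ee (-(n : ℂ) * (t : ℂ)) := by
      unfold ee
      rw [← Complex.exp_add]
      congr 1
      push_cast
      field_simp
      ring
    rw [div_eq_mul_inv, ← Complex.cpow_neg, hG]
    simp only [e1]
    rw [← e2]
    ring
  have stepA : (∫ t : ℝ, ((c*x + c*t + d : ℝ) : ℂ) /
        ((‖(c : ℂ) * ((x : ℂ) + (y : ℂ) * I) + (c : ℂ) * (t : ℂ) + (d : ℂ)‖ : ℝ) : ℂ) ^ (2*s + 4) *
        ee (-(n : ℂ) * (t : ℂ)))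
      = ee ((n : ℂ) * (x : ℂ) + (n : ℂ) * (d : ℂ) / (c : ℂ)) * ∫ u : ℝ, G u := by
    rw [show (fun t : ℝ => ((c*x + c*t + d : ℝ) : ℂ) /
        ((‖(c : ℂ) * ((x : ℂ) + (y : ℂ) * I) + (c : ℂ) * (t : ℂ) + (d : ℂ)‖ : ℝ) : ℂ) ^ (2*s + 4) *
        ee (-(n : ℂ) * (t : ℂ)))
      = fun t : ℝ => ee ((n : ℂ) * (x : ℂ) + (n : ℂ) * (d : ℂ) / (c : ℂ)) * G (t + (x + d/c)) from
        funext hpt]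
    rw [MeasureTheory.integral_const_mul]
    rw [MeasureTheory.integral_add_right_eq_self G (x + d/c)]
  -- Step B
  have hGB : ∀ u : ℝ, G u = (c : ℂ) ^ (-2*s - 3) * H u := by
    intro u
    rw [hG, hH]
    simp only
    rw [show (((c*u)^2 + (c*y)^2 : ℝ) : ℂ) = ((c^2 : ℝ) : ℂ) * ((u^2 + y^2 : ℝ) : ℂ) by
        push_cast; ring,
      Complex.mul_cpow_ofReal_nonneg (sq_nonneg c) (by positivity), sq_cpow hc.le,
      Complex.ofReal_mul]
    rw [show (c : ℂ) ^ (-2*s - 3 : ℂ) = (c : ℂ) * (c : ℂ) ^ (2 * -(s + 2)) by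
      rw [show (-2*s - 3 : ℂ) = 1 + 2 * -(s + 2) by ring, Complex.cpow_add _ _ hc',
        Complex.cpow_one]]
    ring
  have stepB : (∫ u : ℝ, G u) = (c : ℂ) ^ (-2*s - 3) * ∫ u : ℝ, H u := by
    simp only [hGB]
    rw [MeasureTheory.integral_const_mul]
  -- Step C
  have hHy : ∀ t : ℝ, H (y * t) = (y : ℂ) * (((y^2 : ℝ) : ℂ) ^ (-(s + 2)) * K t) := by
    intro t
    rw [hH, hK, hQ]
    simp only
    rw [show (((y*t)^2 + y^2 : ℝ) : ℂ) = ((y^2 : ℝ) : ℂ) * ((t^2 + 1 : ℝ) : ℂ) by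
        push_cast; ring,
      Complex.mul_cpow_ofReal_nonneg (sq_nonneg y) (by positivity), Complex.ofReal_mul]
    ring
  have stepC : (∫ u : ℝ, H u) = (y : ℂ) ^ (-2*s - 2) * ∫ t : ℝ, K t := by
    have h := MeasureTheory.Measure.integral_comp_mul_left H y
    rw [abs_of_pos (inv_pos.2 hy)] at h
    simp only [hHy] at h
    rw [MeasureTheory.integral_const_mul, MeasureTheory.integral_const_mul] at h
    have h2 : (∫ u : ℝ, H u) = (y : ℂ) * ((y : ℂ) * (((y^2 : ℝ) : ℂ) ^ (-(s + 2)) * ∫ t : ℝ, K t)) := by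
      have := congrArg (fun z => (y : ℝ) • z) h
      simp only [smul_smul, mul_inv_cancel₀ hy.ne', one_smul] at this
      rw [← this, Complex.real_smul]
    have hy2 : ((y^2 : ℝ) : ℂ) ≠ 0 := Complex.ofReal_ne_zero.2 (by positivity)
    have e3 : (y : ℂ) ^ (-2*s - 2 : ℂ) = (y : ℂ) * ((y : ℂ) * ((y^2 : ℝ) : ℂ) ^ (-(s + 2))) := by
      calc (y : ℂ) ^ (-2*s - 2 : ℂ)
          = ((y^2 : ℝ) : ℂ) ^ ((1 : ℂ) + -(s + 2)) := by rw [sq_cpow hy.le]; congr 1; ring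
        _ = ((y^2 : ℝ) : ℂ) ^ (1 : ℂ) * ((y^2 : ℝ) : ℂ) ^ (-(s + 2)) := Complex.cpow_add _ _ hy2
        _ = (y : ℂ) * ((y : ℂ) * ((y^2 : ℝ) : ℂ) ^ (-(s + 2))) := by
            rw [Complex.cpow_one]; push_cast; ring
    rw [h2, e3]
    ring
  -- Step D
  have hKsplit : ∀ t : ℝ, K t = Kc t - I * Ks t := by
    intro t
    rw [hK, hKc, hKs]
    simp only
    have he : ee (-(n : ℂ) * ((y * t : ℝ) : ℂ))
        = ((Real.cos (2*π*(n : ℝ)*y*t) : ℝ) : ℂ) - I * ((Real.sin (2*π*(n : ℝ)*y*t) : ℝ) : ℂ) := by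
      unfold ee
      rw [show 2 * (π : ℂ) * I * (-(n : ℂ) * ((y * t : ℝ) : ℂ))
          = ((-(2*π*(n : ℝ)*y*t) : ℝ) : ℂ) * I by push_cast; ring]
      rw [Complex.exp_mul_I, ← Complex.ofReal_cos, ← Complex.ofReal_sin,
        Real.cos_neg, Real.sin_neg]
      push_cast
      ring
    rw [he]
    ring
  have hIc : MeasureTheory.Integrable Kc := by
    rw [hKc, hQ]
    exact integrable_aux s hs _ (Real.continuous_cos.comp (by continuity))
      (fun t => Real.abs_cos_le_one _)
  have hIs : MeasureTheory.Integrable Ks := by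
    rw [hKs, hQ]
    exact integrable_aux s hs _ (Real.continuous_sin.comp (by continuity))
      (fun t => Real.abs_sin_le_one _)
  have hKcodd : (∫ t : ℝ, Kc t) = 0 := by
    have hodd : ∀ t : ℝ, Kc (-t) = -Kc t := by
      intro t
      rw [hKc, hQ]
      simp only
      rw [show ((-t : ℝ))^2 + 1 = t^2 + 1 by ring,
        show 2*π*(n : ℝ)*y*(-t) = -(2*π*(n : ℝ)*y*t) by ring, Real.cos_neg]
      push_cast
      ring
    have h := MeasureTheory.Measure.integral_comp_mul_left Kc (-1)
    rw [show |((-1 : ℝ))⁻¹| = 1 by norm_num, one_smul] at h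
    simp only [neg_one_mul, hodd] at h
    rw [MeasureTheory.integral_neg] at h
    have h2 : (2 : ℂ) * ∫ t : ℝ, Kc t = 0 := by linear_combination -h
    exact (mul_eq_zero.mp h2).resolve_left two_ne_zero
  have hKseven : (∫ t : ℝ, Ks t) = 2 * ∫ t in Set.Ioi (0 : ℝ), Ks t := by
    have heven : ∀ t : ℝ, Ks (-t) = Ks t := by
      intro t
      rw [hKs, hQ]
      simp only
      rw [show ((-t : ℝ))^2 + 1 = t^2 + 1 by ring,
        show 2*π*(n : ℝ)*y*(-t) = -(2*π*(n : ℝ)*y*t) by ring, Real.sin_neg]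
      push_cast
      ring
    have h1 : (∫ t in Set.Iic (0 : ℝ), Ks t) = ∫ t in Set.Ioi (0 : ℝ), Ks t := by
      have h := integral_comp_neg_Ioi (0 : ℝ) Ks
      rw [neg_zero] at h
      rw [← h]
      simp only [heven]
    have h2 := intervalIntegral.integral_Iic_add_Ioi (b := (0 : ℝ))
      hIs.integrableOn hIs.integrableOn
    rw [← h2, h1]
    ring
  have stepD : (∫ t : ℝ, K t) = -2 * I * ∫ t in Set.Ioi (0 : ℝ), Ks t := by
    rw [show (fun t : ℝ => K t) = fun t : ℝ => Kc t - I * Ks t from funext hKsplit]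
    rw [MeasureTheory.integral_sub hIc (hIs.const_mul I), MeasureTheory.integral_const_mul,
      hKcodd, hKseven]
    ring
  rw [stepA, stepB, stepC, stepD]
  ring

end
end

section
/- Let s ∈ ℂ with Re(s) > 1/2, let n be a nonzero integer and y > 0. Then ∫_{−∞}^{∞} (t²+1)^{−s} · e(−nyt) dt = 2 π^s |n|^{s−1/2} y^{s−1/2} Γ(s)^{−1} · K_{s−1/2}(2π|n|y), where K_ν(x) := ∫_{0}^{∞} exp(−x cosh t) · cosh(νt) dt is the modified Bessel function of the second kind (x > 0, ν ∈ ℂ). -/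
open Complex MeasureTheory
open scoped Real

noncomputable section

open Set Filter


lemma self_le_sinh' {t : ℝ} (ht : 0 ≤ t) : t ≤ Real.sinh t := by
  rcases eq_or_lt_of_le ht with h | h
  · simp [← h]
  · exact (Real.self_lt_sinh_iff.2 h).le

lemma abs_le_abs_sinh (t : ℝ) : |t| ≤ |Real.sinh t| := by
  have h := self_le_sinh' (_root_.abs_nonneg t)
  calc |t| ≤ Real.sinh |t| := h
    _ = |Real.sinh t| := by
        rcases le_or_gt 0 t with h' | h'
        · rw [_root_.abs_of_nonneg h', _root_.abs_of_nonneg (by rwa [← Real.sinh_zero, Real.sinh_le_sinh])]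
        · rw [_root_.abs_of_neg h', Real.sinh_neg, _root_.abs_of_neg (by rwa [← Real.sinh_zero, Real.sinh_lt_sinh])]

lemma cosh_ge (x : ℝ) : 1 + x^2/2 ≤ Real.cosh x := by
  have h1 : Real.cosh x = 1 + 2 * Real.sinh (x/2)^2 := by
    have := Real.cosh_two_mul (x/2)
    have h2 := Real.cosh_sq (x/2)
    rw [show 2*(x/2) = x by ring] at this
    rw [this, h2]; ring
  have h3 : (x/2)^2 ≤ Real.sinh (x/2)^2 := by
    have := abs_le_abs_sinh (x/2)
    nlinarith [_root_.abs_nonneg (x/2), _root_.sq_abs (x/2), _root_.sq_abs (Real.sinh (x/2))]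
  nlinarith

lemma bessel_integrand_integrable (w : ℂ) {a : ℝ} (ha : 0 < a) :
    IntegrableOn (fun x : ℝ => Complex.exp (w * x) * Complex.exp (-((a * Real.cosh x : ℝ) : ℂ))) (Ioi 0) := by
  have hb : (0:ℝ) < a/2 := by linarith
  have hint : Integrable fun x : ℝ => Complex.exp (-((a/2 : ℝ):ℂ) * x^2 + (w.re : ℂ) * x + (-a : ℂ)) :=
    integrable_cexp_quadratic (by simpa using hb) _ _
  refine (hint.norm.mono' ?_ ?_).integrableOn
  · apply Measurable.aestronglyMeasurable
    fun_prop
  · filter_upwards with x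
    rw [norm_mul, Complex.norm_exp, Complex.norm_exp,
      Complex.norm_exp, ← Real.exp_add]
    apply Real.exp_le_exp.2
    have h1 : (w * x).re = w.re * x := by simp
    have h2 : (-((a * Real.cosh x : ℝ) : ℂ)).re = -(a * Real.cosh x) := by simp
    have h3 : (-((a/2 : ℝ):ℂ) * x^2 + (w.re : ℂ) * x + (-a : ℂ)).re = -(a/2) * x^2 + w.re * x + (-a) := by simp [← Complex.ofReal_pow]
    rw [h1, h2, h3]
    have := cosh_ge x
    nlinarith

lemma cpow_real_exp {r : ℝ} (hr : 0 < r) (x : ℝ) (w : ℂ) :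
    (((r * Real.exp x : ℝ)) : ℂ) ^ w = (r:ℂ)^w * Complex.exp (w * x) := by
  rw [Complex.ofReal_mul, mul_cpow_ofReal_nonneg hr.le (Real.exp_pos x).le]
  congr 1
  rw [Complex.cpow_def_of_ne_zero (by exact_mod_cast (Real.exp_pos x).ne'), ← Complex.ofReal_log (Real.exp_pos x).le,
    Real.log_exp, mul_comm]

lemma img1 {c : ℝ} (hc : 0 < c) : (fun x : ℝ => c * Real.exp x) '' (Ioi 0) = Ioi c := by
  ext u
  simp only [mem_image, mem_Ioi]
  constructor
  · rintro ⟨x, hx, rfl⟩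
    nlinarith [Real.exp_pos x, (Real.one_lt_exp_iff (x := x)).2 hx]
  · intro hu
    have hu0 : 0 < u / c := div_pos (hc.trans hu) hc
    refine ⟨Real.log (u / c), ?_, ?_⟩
    · have : 1 < u / c := (one_lt_div hc).2 hu
      exact Real.log_pos this
    · rw [Real.exp_log hu0]; field_simp

lemma img2 {c : ℝ} (hc : 0 < c) : (fun x : ℝ => c * Real.exp (-x)) '' (Ici 0) = Ioc 0 c := by
  ext u
  simp only [mem_image, mem_Ici, mem_Ioc]
  constructor
  · rintro ⟨x, hx, rfl⟩
    constructor
    · positivity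
    · nlinarith [Real.exp_le_one_iff (x := -x), Real.exp_pos (-x),
        (Real.exp_le_one_iff (x := -x)).2 (by linarith : -x ≤ 0)]
  · rintro ⟨hu0, huc⟩
    have hu0' : 0 < u / c := div_pos hu0 hc
    refine ⟨-Real.log (u / c), ?_, ?_⟩
    · have : u / c ≤ 1 := (div_le_one hc).2 huc
      have := Real.log_nonpos (le_of_lt hu0') this
      linarith
    · rw [neg_neg, Real.exp_log hu0']; field_simp


lemma subst_main {s : ℂ} (hs : 1/2 < s.re) {a : ℝ} (ha : 0 < a) :
    ∫ u in Ioi (0:ℝ), (u:ℂ)^(s - 3/2) * Complex.exp (-((u + a^2/(4*u) : ℝ) : ℂ))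
      = 2 * (((a/2 : ℝ)):ℂ)^(s - 1/2) * Kbessel (s - 1/2) a := by
  set ν : ℂ := s - 1/2 with hν
  have hc : (0:ℝ) < a/2 := by linarith
  set g : ℝ → ℂ := fun u => (u:ℂ)^(s - 3/2) * Complex.exp (-((u + a^2/(4*u) : ℝ) : ℂ)) with hg
  -- integrability of g on Ioi 0
  have hgint : IntegrableOn g (Ioi 0) := by
    have hσ : 0 < s.re - 1/2 := by linarith
    have hbound := Real.GammaIntegral_convergent hσ
    refine hbound.mono' ?_ ?_
    · apply Measurable.aestronglyMeasurable
      fun_prop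
    · filter_upwards [ae_restrict_mem measurableSet_Ioi] with u hu
      simp only [mem_Ioi] at hu
      rw [hg]
      simp only [norm_mul, Complex.norm_exp]
      rw [Complex.norm_cpow_eq_rpow_re_of_pos hu]
      have h1 : (s - 3/2).re = s.re - 3/2 := by simp
      have h2 : (-((u + a^2/(4*u) : ℝ) : ℂ)).re = -(u + a^2/(4*u)) := by rw [Complex.neg_re, Complex.ofReal_re]
      rw [h1, h2]
      have h3 : Real.exp (-(u + a^2/(4*u))) ≤ Real.exp (-u) := by
        apply Real.exp_le_exp.2
        have : 0 ≤ a^2/(4*u) := by positivity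
        linarith
      have h4 : s.re - 1/2 - 1 = s.re - 3/2 := by ring
      rw [h4]
      have h5 : (0:ℝ) ≤ u ^ (s.re - 3/2) := Real.rpow_nonneg hu.le _
      calc u ^ (s.re - 3/2) * Real.exp (-(u + a^2/(4*u)))
          ≤ u ^ (s.re - 3/2) * Real.exp (-u) := by nlinarith [Real.exp_pos (-(u + a^2/(4*u)))]
        _ = Real.exp (-u) * u ^ (s.re - 3/2) := by ring
  have hcne : ((a/2:ℝ):ℂ) ≠ 0 := by exact_mod_cast hc.ne'
  -- pointwise identity
  have pt : ∀ x : ℝ, ((a/2 * Real.exp x : ℝ)) • g (a/2 * Real.exp x)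
      = ((a/2:ℝ):ℂ)^ν * (Complex.exp (ν * x) * Complex.exp (-((a * Real.cosh x : ℝ) : ℂ))) := by
    intro x
    have harg : a/2 * Real.exp x + a^2/(4*(a/2 * Real.exp x)) = a * Real.cosh x := by
      rw [Real.cosh_eq, Real.exp_neg]
      field_simp
      ring
    have hkey : g (a/2 * Real.exp x)
        = ((a/2:ℝ):ℂ)^(s - 3/2) * Complex.exp ((s - 3/2) * x) * Complex.exp (-((a * Real.cosh x : ℝ) : ℂ)) := by
      rw [hg]
      simp only
      rw [cpow_real_exp hc, harg]
    rw [hkey, Complex.real_smul, Complex.ofReal_mul, Complex.ofReal_exp]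
    have h6 : ((a/2:ℝ):ℂ)^ν = ((a/2:ℝ):ℂ)^(s - 3/2) * ((a/2:ℝ):ℂ) := by
      rw [hν, show s - 1/2 = s - 3/2 + 1 by ring, Complex.cpow_add _ _ hcne, Complex.cpow_one]
    have h7 : Complex.exp (ν * x) = Complex.exp ((s - 3/2) * x) * Complex.exp (x : ℂ) := by
      rw [← Complex.exp_add]
      congr 1
      rw [hν]; ring
    rw [h6, h7]; ring
  -- change of variables on Ioi (a/2)
  have cv1 : ∫ u in Ioi (a/2), g u
      = ∫ x in Ioi (0:ℝ), |a/2 * Real.exp x| • g (a/2 * Real.exp x) := by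
    rw [← img1 hc]
    exact integral_image_eq_integral_abs_deriv_smul measurableSet_Ioi
      (fun x _ => ((Real.hasDerivAt_exp x).const_mul (a/2)).hasDerivWithinAt)
      (fun x _ y _ h => Real.exp_injective (mul_left_cancel₀ hc.ne' h)) g
  -- change of variables on Ioc 0 (a/2)
  have cv2 : ∫ u in Ioc 0 (a/2), g u
      = ∫ x in Ici (0:ℝ), |a/2 * (Real.exp (-x) * (-1))| • g (a/2 * Real.exp (-x)) := by
    rw [← img2 hc]
    exact integral_image_eq_integral_abs_deriv_smul measurableSet_Ici
      (fun x _ => (((Real.hasDerivAt_exp (-x)).comp x (hasDerivAt_neg x)).const_mul (a/2)).hasDerivWithinAt)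
      (fun x _ y _ h => neg_injective (Real.exp_injective (mul_left_cancel₀ hc.ne' h))) g
  have e1 : ∫ x in Ioi (0:ℝ), |a/2 * Real.exp x| • g (a/2 * Real.exp x)
      = ((a/2:ℝ):ℂ)^ν * ∫ x in Ioi (0:ℝ), Complex.exp (ν * x) * Complex.exp (-((a * Real.cosh x : ℝ) : ℂ)) := by
    rw [← integral_const_mul]
    apply setIntegral_congr_fun measurableSet_Ioi
    intro x _
    dsimp only
    rw [_root_.abs_of_pos (by positivity), pt x]
  have e2 : ∫ x in Ici (0:ℝ), |a/2 * (Real.exp (-x) * (-1))| • g (a/2 * Real.exp (-x))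
      = ((a/2:ℝ):ℂ)^ν * ∫ x in Ioi (0:ℝ), Complex.exp (-(ν * x)) * Complex.exp (-((a * Real.cosh x : ℝ) : ℂ)) := by
    rw [MeasureTheory.integral_Ici_eq_integral_Ioi, ← integral_const_mul]
    apply setIntegral_congr_fun measurableSet_Ioi
    intro x _
    dsimp only
    have h8 := pt (-x)
    rw [Real.cosh_neg, Complex.ofReal_neg, mul_neg] at h8
    rw [show |a/2 * (Real.exp (-x) * (-1))| = a/2 * Real.exp (-x) by
      rw [mul_neg_one, mul_neg, abs_neg, _root_.abs_of_pos (by positivity)], h8]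
  have int1 : IntegrableOn (fun x : ℝ => Complex.exp (-(ν * x)) * Complex.exp (-((a * Real.cosh x : ℝ) : ℂ))) (Ioi 0) := by
    have := bessel_integrand_integrable (-ν) ha
    simpa [neg_mul] using this
  have int2 : IntegrableOn (fun x : ℝ => Complex.exp (ν * x) * Complex.exp (-((a * Real.cosh x : ℝ) : ℂ))) (Ioi 0) :=
    bessel_integrand_integrable ν ha
  have split : ∫ u in Ioi (0:ℝ), g u = (∫ u in Ioc 0 (a/2), g u) + ∫ u in Ioi (a/2), g u := by
    rw [← setIntegral_union (Ioc_disjoint_Ioi le_rfl) measurableSet_Ioi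
      (hgint.mono_set Ioc_subset_Ioi_self) (hgint.mono_set (Ioi_subset_Ioi hc.le)),
      Ioc_union_Ioi_eq_Ioi hc.le]
  have comb : (∫ x in Ioi (0:ℝ), Complex.exp (-(ν * x)) * Complex.exp (-((a * Real.cosh x : ℝ) : ℂ)))
      + (∫ x in Ioi (0:ℝ), Complex.exp (ν * x) * Complex.exp (-((a * Real.cosh x : ℝ) : ℂ)))
      = 2 * Kbessel ν a := by
    rw [← integral_add int1 int2, Kbessel, ← integral_const_mul]
    apply setIntegral_congr_fun measurableSet_Ioi
    intro x _
    dsimp only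
    rw [Complex.cosh]
    have : -((a * Real.cosh x : ℝ) : ℂ) = -(a:ℂ) * (Real.cosh x : ℂ) := by push_cast; ring
    rw [this]
    ring
  rw [split, cv1, cv2, e1, e2]
  rw [show ((a/2:ℝ):ℂ)^ν * (∫ x in Ioi (0:ℝ), Complex.exp (-(ν * x)) * Complex.exp (-((a * Real.cosh x : ℝ) : ℂ)))
      + ((a/2:ℝ):ℂ)^ν * (∫ x in Ioi (0:ℝ), Complex.exp (ν * x) * Complex.exp (-((a * Real.cosh x : ℝ) : ℂ)))
      = ((a/2:ℝ):ℂ)^ν * ((∫ x in Ioi (0:ℝ), Complex.exp (-(ν * x)) * Complex.exp (-((a * Real.cosh x : ℝ) : ℂ)))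
      + ∫ x in Ioi (0:ℝ), Complex.exp (ν * x) * Complex.exp (-((a * Real.cosh x : ℝ) : ℂ))) by ring, comb]
  ring

lemma pointwise_gamma {s : ℂ} (hs0 : 0 < s.re) (t : ℝ) :
    ((t^2+1:ℝ):ℂ)^(-s) = (Complex.Gamma s)⁻¹ *
      ∫ u in Ioi (0:ℝ), (u:ℂ)^(s-1) * Complex.exp (-(((t^2+1:ℝ)):ℂ) * u) := by
  have hr : (0:ℝ) < t^2+1 := by positivity
  have h := Complex.integral_cpow_mul_exp_neg_mul_Ioi hs0 hr
  simp_rw [← neg_mul] at h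
  rw [h]
  have harg : Complex.arg ((t^2+1:ℝ):ℂ) ≠ π := by
    rw [Complex.arg_ofReal_of_nonneg hr.le]
    exact fun h => Real.pi_ne_zero h.symm
  have h2 : ((1:ℂ)/((t^2+1:ℝ):ℂ))^s = ((t^2+1:ℝ):ℂ)^(-s) := by
    rw [one_div, Complex.inv_cpow _ _ harg, ← Complex.cpow_neg]
  have hΓ : Complex.Gamma s ≠ 0 := Complex.Gamma_ne_zero_of_re_pos hs0
  rw [h2]
  field_simp

lemma norm_eval {s : ℂ} (β t u : ℝ) (hu : 0 < u) :
    ‖Complex.exp (I * β * t) * ((u:ℂ)^(s-1) * Complex.exp (-(((t^2+1:ℝ)):ℂ) * u))‖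
      = u ^ (s.re - 1) * Real.exp (-((t^2+1) * u)) := by
  simp only [norm_mul, Complex.norm_exp]
  rw [Complex.norm_cpow_eq_rpow_re_of_pos hu]
  have h1 : (I * β * t).re = 0 := by simp
  have h2 : (-(((t^2+1:ℝ)):ℂ) * u).re = -((t^2+1) * u) := by
    rw [← Complex.ofReal_neg, ← Complex.ofReal_mul, Complex.ofReal_re]; ring
  have h3 : (s-1).re = s.re - 1 := by simp
  rw [h1, h2, h3, Real.exp_zero, one_mul]

lemma prod_integrable {s : ℂ} (hs : 1/2 < s.re) (β : ℝ) :
    Integrable (fun p : ℝ × ℝ =>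
        Complex.exp (I * β * p.1) * ((p.2:ℂ)^(s-1) * Complex.exp (-(((p.1^2+1:ℝ)):ℂ) * p.2)))
      (volume.prod (volume.restrict (Ioi 0))) := by
  have hs0 : 0 < s.re := by linarith
  have hmeas : AEStronglyMeasurable (fun p : ℝ × ℝ =>
      Complex.exp (I * β * p.1) * ((p.2:ℂ)^(s-1) * Complex.exp (-(((p.1^2+1:ℝ)):ℂ) * p.2)))
      (volume.prod (volume.restrict (Ioi 0))) := by
    apply Measurable.aestronglyMeasurable
    fun_prop
  rw [integrable_prod_iff hmeas]
  constructor
  · filter_upwards with t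
    have hb := Real.GammaIntegral_convergent hs0
    have h1 : IntegrableOn (fun u : ℝ => (u:ℂ)^(s-1) * Complex.exp (-(((t^2+1:ℝ)):ℂ) * u)) (Ioi 0) := by
      refine hb.mono' ?_ ?_
      · apply Measurable.aestronglyMeasurable; fun_prop
      · filter_upwards [ae_restrict_mem measurableSet_Ioi] with u hu
        simp only [mem_Ioi] at hu
        have := norm_eval (s := s) 0 t u hu
        simp only [norm_mul] at this ⊢
        rw [Complex.norm_cpow_eq_rpow_re_of_pos hu, Complex.norm_exp]
        have h2 : (-(((t^2+1:ℝ)):ℂ) * u).re = -((t^2+1) * u) := by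
          rw [← Complex.ofReal_neg, ← Complex.ofReal_mul, Complex.ofReal_re]; ring
        have h3 : (s-1).re = s.re - 1 := by simp
        rw [h2, h3]
        have hr1 : (1:ℝ) ≤ t^2+1 := by nlinarith
        have : Real.exp (-((t^2+1)*u)) ≤ Real.exp (-u) := by
          apply Real.exp_le_exp.2; nlinarith
        have h5 : (0:ℝ) ≤ u ^ (s.re - 1) := Real.rpow_nonneg hu.le _
        calc u ^ (s.re - 1) * Real.exp (-((t^2+1)*u)) ≤ u ^ (s.re - 1) * Real.exp (-u) := by
              nlinarith [Real.exp_pos (-((t^2+1)*u))]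
          _ = Real.exp (-u) * u ^ (s.re - 1) := by ring
    exact h1.const_mul _
  · have heq : ∀ t : ℝ, (∫ u in Ioi (0:ℝ),
        ‖Complex.exp (I * β * t) * ((u:ℂ)^(s-1) * Complex.exp (-(((t^2+1:ℝ)):ℂ) * u))‖)
        = (1/(t^2+1)) ^ s.re * Real.Gamma s.re := by
      intro t
      rw [← Real.integral_rpow_mul_exp_neg_mul_Ioi hs0 (by positivity : (0:ℝ) < t^2+1)]
      apply setIntegral_congr_fun measurableSet_Ioi
      intro u hu
      exact norm_eval β t u hu
    refine (Integrable.congr (f := fun t : ℝ => ((1:ℝ) + ‖t‖^2) ^ (-(2*s.re)/2) * Real.Gamma s.re) ?_ ?_)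
    · refine (integrable_rpow_neg_one_add_norm_sq (E := ℝ) ?_).mul_const _
      simp only [Module.finrank_self]
      norm_num; linarith
    · filter_upwards with t
      rw [heq t]
      congr 1
      rw [Real.norm_eq_abs, _root_.sq_abs]
      rw [show -(2*s.re)/2 = -s.re by ring, show (1:ℝ) + t^2 = t^2+1 by ring,
        Real.rpow_neg (by positivity), ← Real.inv_rpow (by positivity), one_div]

lemma inner_gaussian {s : ℂ} {β u : ℝ} (hu : 0 < u) :
    ∫ t : ℝ, Complex.exp (I * β * t) * ((u:ℂ)^(s-1) * Complex.exp (-(((t^2+1:ℝ)):ℂ) * u))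
      = (Real.sqrt π : ℂ) * ((u:ℂ)^(s - 3/2) * Complex.exp (-(((u + β^2/(4*u) : ℝ)):ℂ))) := by
  have hune : ((u:ℝ):ℂ) ≠ 0 := by exact_mod_cast hu.ne'
  have e : ∀ t : ℝ, Complex.exp (I * β * t) * ((u:ℂ)^(s-1) * Complex.exp (-(((t^2+1:ℝ)):ℂ) * u))
      = ((u:ℂ)^(s-1) * Complex.exp (-(u:ℂ))) * (Complex.exp (I * (β:ℂ) * (t:ℂ)) * Complex.exp (-(u:ℂ) * (t:ℂ)^2)) := by
    intro t
    rw [show -(((t^2+1:ℝ)):ℂ) * u = -(u:ℂ) + -(u:ℂ) * (t:ℂ)^2 by push_cast; ring, Complex.exp_add]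
    ring
  rw [show (∫ t : ℝ, Complex.exp (I * β * t) * ((u:ℂ)^(s-1) * Complex.exp (-(((t^2+1:ℝ)):ℂ) * u)))
      = ∫ t : ℝ, ((u:ℂ)^(s-1) * Complex.exp (-(u:ℂ))) * (Complex.exp (I * (β:ℂ) * (t:ℂ)) * Complex.exp (-(u:ℂ) * (t:ℂ)^2))
      from by simp_rw [e]]
  rw [integral_const_mul, fourierIntegral_gaussian (by simpa using hu) (β:ℂ)]
  -- now algebra
  have h1 : ((π:ℂ))/(u:ℂ) = (((π/u : ℝ)):ℂ) := by push_cast; ring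
  have h2 : ((((π/u : ℝ)):ℂ)) ^ (1/2 : ℂ) = ((Real.sqrt (π/u) : ℝ):ℂ) := by
    rw [show (1/2 : ℂ) = ((1/2 : ℝ):ℂ) by norm_num, ← Complex.ofReal_cpow (by positivity),
      Real.sqrt_eq_rpow]
  have h3 : Real.sqrt (π/u) = Real.sqrt π * u ^ (-(1/2):ℝ) := by
    rw [Real.sqrt_div Real.pi_pos.le, Real.rpow_neg hu.le, Real.sqrt_eq_rpow u, div_eq_mul_inv]
  have h4 : ((u ^ (-(1/2):ℝ) : ℝ):ℂ) = (u:ℂ) ^ (-(1/2) : ℂ) := by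
    rw [Complex.ofReal_cpow hu.le]; push_cast; norm_num
  have h5 : (u:ℂ)^(s-1) * (u:ℂ)^(-(1/2):ℂ) = (u:ℂ)^(s - 3/2) := by
    rw [← Complex.cpow_add _ _ hune]; congr 1; ring
  have h6 : Complex.exp (-(u:ℂ)) * Complex.exp (-(β:ℂ)^2/(4*(u:ℂ)))
      = Complex.exp (-(((u + β^2/(4*u) : ℝ)):ℂ)) := by
    rw [← Complex.exp_add]; congr 1; push_cast; ring
  rw [h1, h2, h3, Complex.ofReal_mul, h4]
  calc (u:ℂ)^(s-1) * Complex.exp (-(u:ℂ)) * (((Real.sqrt π : ℂ) * (u:ℂ)^(-(1/2):ℂ)) * Complex.exp (-(β:ℂ)^2/(4*(u:ℂ))))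
      = (Real.sqrt π : ℂ) * (((u:ℂ)^(s-1) * (u:ℂ)^(-(1/2):ℂ)) * (Complex.exp (-(u:ℂ)) * Complex.exp (-(β:ℂ)^2/(4*(u:ℂ))))) := by ring
    _ = _ := by rw [h5, h6]

theorem main_integral {s : ℂ} (hs : 1/2 < s.re) {β : ℝ} (hβ : β ≠ 0) :
    ∫ t : ℝ, ((t^2+1:ℝ):ℂ)^(-s) * Complex.exp (I * β * t)
      = (Complex.Gamma s)⁻¹ * (Real.sqrt π : ℂ) *
        (2 * ((|β|/2 : ℝ):ℂ)^(s - 1/2) * Kbessel (s - 1/2) |β|) := by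
  have hs0 : 0 < s.re := by linarith
  have step1 : ∀ t : ℝ, ((t^2+1:ℝ):ℂ)^(-s) * Complex.exp (I * β * t)
      = (Complex.Gamma s)⁻¹ * ∫ u in Ioi (0:ℝ),
          Complex.exp (I * β * t) * ((u:ℂ)^(s-1) * Complex.exp (-(((t^2+1:ℝ)):ℂ) * u)) := by
    intro t
    calc ((t^2+1:ℝ):ℂ)^(-s) * Complex.exp (I * β * t)
        = (Complex.Gamma s)⁻¹ * (Complex.exp (I * β * t) *
            ∫ u in Ioi (0:ℝ), (u:ℂ)^(s-1) * Complex.exp (-(((t^2+1:ℝ)):ℂ) * u)) := by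
          rw [pointwise_gamma hs0 t]; ring
      _ = _ := by rw [integral_const_mul]
  rw [show (∫ t : ℝ, ((t^2+1:ℝ):ℂ)^(-s) * Complex.exp (I * β * t))
      = ∫ t : ℝ, (Complex.Gamma s)⁻¹ * ∫ u in Ioi (0:ℝ),
          Complex.exp (I * β * t) * ((u:ℂ)^(s-1) * Complex.exp (-(((t^2+1:ℝ)):ℂ) * u))
      from by simp_rw [step1]]
  rw [integral_const_mul]
  have swap := MeasureTheory.integral_integral_swap
    (f := fun (t : ℝ) (u : ℝ) => Complex.exp (I * β * t) * ((u:ℂ)^(s-1) * Complex.exp (-(((t^2+1:ℝ)):ℂ) * u)))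
    (μ := volume) (ν := volume.restrict (Ioi 0)) (by exact prod_integrable hs β)
  rw [swap]
  have step3 : (∫ u in Ioi (0:ℝ), ∫ t : ℝ,
        Complex.exp (I * β * t) * ((u:ℂ)^(s-1) * Complex.exp (-(((t^2+1:ℝ)):ℂ) * u)))
      = ∫ u in Ioi (0:ℝ), (Real.sqrt π : ℂ) *
          ((u:ℂ)^(s - 3/2) * Complex.exp (-(((u + |β|^2/(4*u) : ℝ)):ℂ))) := by
    apply setIntegral_congr_fun measurableSet_Ioi
    intro u hu
    simp only [mem_Ioi] at hu
    dsimp only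
    rw [inner_gaussian hu, _root_.sq_abs]
  rw [step3, integral_const_mul, subst_main hs (abs_pos.2 hβ)]
  ring


/-- Bessel-type Fourier integral: for `n ≠ 0`,
`∫ (t²+1)^{-s} e(-nyt) dt = 2π^s |n|^{s-1/2} y^{s-1/2} Γ(s)⁻¹ K_{s-1/2}(2π|n|y)`. -/
theorem stmt11 (s : ℂ) (hs : 1/2 < s.re) (n : ℤ) (hn : n ≠ 0) (y : ℝ) (hy : 0 < y) :
    (∫ t : ℝ, ((t^2 + 1 : ℝ) : ℂ) ^ (-s) * ee (-(n : ℂ) * (y : ℂ) * (t : ℂ))) =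
      2 * (π : ℂ) ^ s * ((|(n : ℝ)| : ℝ) : ℂ) ^ (s - 1/2) * ((y : ℝ) : ℂ) ^ (s - 1/2) *
        (Complex.Gamma s)⁻¹ * Kbessel (s - 1/2) (2*π * |(n : ℝ)| * y) := by
  have hn' : ((n:ℝ)) ≠ 0 := by exact_mod_cast hn
  have hβ : (-(2*π*(n:ℝ)*y)) ≠ 0 := by
    apply neg_ne_zero.2
    apply mul_ne_zero (mul_ne_zero (mul_ne_zero two_ne_zero Real.pi_ne_zero) hn') hy.ne'
  have habs : |(-(2*π*(n:ℝ)*y))| = 2*π*|(n:ℝ)| * y := by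
    rw [abs_neg, abs_mul, abs_mul, abs_mul, _root_.abs_of_pos hy,
      _root_.abs_of_pos Real.pi_pos]
    norm_num
  have key := main_integral hs hβ
  rw [habs] at key
  have hee : ∀ t : ℝ, ee (-(n : ℂ) * (y : ℂ) * (t : ℂ))
      = Complex.exp (I * ((-(2*π*(n:ℝ)*y) : ℝ) : ℂ) * (t:ℂ)) := by
    intro t
    rw [ee]
    congr 1
    push_cast
    ring
  rw [show (∫ t : ℝ, ((t^2 + 1 : ℝ) : ℂ) ^ (-s) * ee (-(n : ℂ) * (y : ℂ) * (t : ℂ)))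
      = ∫ t : ℝ, ((t^2 + 1 : ℝ) : ℂ) ^ (-s) * Complex.exp (I * ((-(2*π*(n:ℝ)*y) : ℝ) : ℂ) * (t:ℂ))
      from by simp_rw [hee], key]
  -- constants
  have h1 : ((2*π*|(n:ℝ)| * y/2 : ℝ):ℂ)^(s - 1/2)
      = ((π:ℝ):ℂ)^(s-1/2) * (((|(n:ℝ)| : ℝ):ℂ)^(s-1/2) * ((y:ℝ):ℂ)^(s-1/2)) := by
    rw [show (2*π*|(n:ℝ)| * y/2 : ℝ) = π * (|(n:ℝ)| * y) by ring, Complex.ofReal_mul,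
      mul_cpow_ofReal_nonneg Real.pi_pos.le (by positivity), Complex.ofReal_mul,
      mul_cpow_ofReal_nonneg (abs_nonneg _) hy.le]
  have h2 : ((Real.sqrt π : ℝ):ℂ) * ((π:ℝ):ℂ)^(s-1/2) = ((π:ℝ):ℂ)^s := by
    rw [show ((Real.sqrt π : ℝ):ℂ) = ((π:ℝ):ℂ)^((1:ℂ)/2) by
        rw [show ((1:ℂ)/2) = ((1/2 : ℝ):ℂ) by norm_num, ← Complex.ofReal_cpow Real.pi_pos.le,
          Real.sqrt_eq_rpow],
      ← Complex.cpow_add _ _ (by exact_mod_cast Real.pi_ne_zero)]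
    norm_num
  rw [h1]
  calc (Complex.Gamma s)⁻¹ * ((Real.sqrt π : ℝ):ℂ) *
        (2 * (((π:ℝ):ℂ)^(s-1/2) * ((((|(n:ℝ)| : ℝ):ℂ))^(s-1/2) * ((y:ℝ):ℂ)^(s-1/2))) *
          Kbessel (s - 1/2) (2*π*|(n:ℝ)| * y))
      = 2 * (((Real.sqrt π : ℝ):ℂ) * ((π:ℝ):ℂ)^(s-1/2)) * (((|(n:ℝ)| : ℝ):ℂ))^(s-1/2) *
          ((y:ℝ):ℂ)^(s-1/2) * (Complex.Gamma s)⁻¹ * Kbessel (s - 1/2) (2*π*|(n:ℝ)| * y) := by ring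
    _ = _ := by rw [h2]


end
end
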